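/- Let F be a p-adic field of odd residue characteristic, G a finite abelian group of odd order, e an integer dividing q_F - 1 with gcd(e,p)=1, and L = F(π^{1/e}) the totally ramified Kummer extension of degree e obtained by adjoining an e-th root of a uniformizer π. Set Π = π^{1/e}. Then the element α = (1/e) Σ_{k=0}^{e-1} Π^{k + (1-e)/2} generates the square root of the inverse different A_{L/F} freely as a module over O_F[Gal(L/F)]; that is, A_{L/F} = O_F[Gal(L/F)]·α. -/

import Mathlib

open Multiplicative Finset

namespace Stmt14Aux

noncomputable def w (z : ℤ) : WithZero (Multiplicative ℤ) :=
  ((ofAdd z : Multiplicative ℤ) : WithZero (Multiplicative ℤ))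

lemma w_mul (a b : ℤ) : w a * w b = w (a + b) := by
  simp [w, ← WithZero.coe_mul, ← ofAdd_add]

lemma w_le_w {a b : ℤ} : w a ≤ w b ↔ a ≤ b := by
  rw [w, w, WithZero.coe_le_coe, Multiplicative.ofAdd_le]

lemma w_lt_w {a b : ℤ} : w a < w b ↔ a < b := by
  rw [w, w, WithZero.coe_lt_coe, Multiplicative.ofAdd_lt]

lemma w_inj {a b : ℤ} : w a = w b ↔ a = b := by
  constructor
  · intro h
    exact le_antisymm (w_le_w.mp h.le) (w_le_w.mp h.ge)
  · rintro rfl; rfl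

lemma w_ne_zero (a : ℤ) : w a ≠ 0 := WithZero.coe_ne_zero

lemma w_zero : w 0 = 1 := rfl

lemma w_zpow (a n : ℤ) : (w a) ^ n = w (n * a) := by
  rw [w, w, ← WithZero.coe_zpow, ← ofAdd_zsmul, smul_eq_mul]

lemma dvd_small {e : ℕ} {d : ℤ} (h : (e : ℤ) ∣ d) (h1 : -(e:ℤ) < d) (h2 : d < e) : d = 0 := by
  rcases eq_or_ne d 0 with h0 | h0
  · exact h0
  · have := Int.le_of_dvd (abs_pos.mpr h0) ((dvd_abs _ _).mpr h)
    rcases abs_cases d with ⟨hd, _⟩ | ⟨hd, _⟩ <;> omega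

section

variable {F L : Type*} [Field F] [Field L] [Algebra F L]
variable (v : Valuation L (WithZero (Multiplicative ℤ))) {e : ℕ} {ϖ : L}

lemma hvz_of (hϖ : v ϖ = w (-1)) (z : ℤ) : v (ϖ ^ z) = w (-z) := by
  rw [map_zpow₀, hϖ, w_zpow, mul_neg_one]

lemma coeff_bound (hpos : 0 < e) (hϖ : v ϖ = w (-1))
    (hF : ∀ c : F, c ≠ 0 → ∃ k : ℤ, v (algebraMap F L c) = w (e * k))
    (t : ℤ) (a : Fin e → F)
    (hle : v (∑ j : Fin e, algebraMap F L (a j) * ϖ ^ (((j : ℕ) : ℤ) - t)) ≤ w t) :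
    ∀ j, v (algebraMap F L (a j)) ≤ 1 := by
  classical
  by_contra hcon
  push_neg at hcon
  obtain ⟨j1, hj1⟩ := hcon
  set f : Fin e → L := fun j => algebraMap F L (a j) * ϖ ^ (((j : ℕ) : ℤ) - t) with hf
  set S : Finset (Fin e) := Finset.univ.filter (fun j => 1 < v (algebraMap F L (a j))) with hS
  have hj1S : j1 ∈ S := by simp [hS, hj1]
  have hSfacts : ∀ j ∈ S, ∃ k : ℤ, 1 ≤ k ∧ v (algebraMap F L (a j)) = w (e * k) := by
    intro j hj
    have hj' : 1 < v (algebraMap F L (a j)) := by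
      simpa [hS] using hj
    have ha0 : a j ≠ 0 := by
      rintro h
      rw [h, map_zero, map_zero] at hj'
      exact absurd hj' (by simp)
    obtain ⟨k, hk⟩ := hF (a j) ha0
    refine ⟨k, ?_, hk⟩
    rw [hk, show (1 : WithZero (Multiplicative ℤ)) = w 0 from rfl] at hj'
    have hek : 0 < (e : ℤ) * k := w_lt_w.mp hj'
    by_contra hk1
    push_neg at hk1
    have : (e : ℤ) * k ≤ 0 := mul_nonpos_of_nonneg_of_nonpos (by positivity) (by omega)
    omega
  have hfval : ∀ j ∈ S, ∀ k : ℤ, v (algebraMap F L (a j)) = w (e * k) →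
      v (f j) = w (e * k + t - j) := by
    intro j _ k hk
    rw [hf]
    simp only
    rw [map_mul, hvz_of v hϖ, hk, w_mul]
    congr 1
    omega
  obtain ⟨j0, hj0S, hj0max⟩ := S.exists_max_image (fun j => v (f j)) ⟨j1, hj1S⟩
  obtain ⟨k0, hk0, hvk0⟩ := hSfacts j0 hj0S
  have hvj0 : v (f j0) = w (e * k0 + t - j0) := hfval j0 hj0S k0 hvk0
  have hgt : w t < v (f j0) := by
    rw [hvj0, ]
    apply w_lt_w.mpr
    have : (j0 : ℤ) < e := by exact_mod_cast j0.isLt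
    nlinarith [hk0, this]
  have key : v (∑ j : Fin e, f j) = v (f j0) := by
    refine v.map_sum_eq_of_lt (Finset.mem_univ j0) ?_
    intro i hi
    have hine : i ≠ j0 := by simpa using hi
    by_cases hiS : i ∈ S
    · obtain ⟨ki, hki, hvki⟩ := hSfacts i hiS
      have hvi : v (f i) = w (e * ki + t - i) := hfval i hiS ki hvki
      have hle' : v (f i) ≤ v (f j0) := hj0max i hiS
      rcases lt_or_eq_of_le hle' with h | h
      · exact h
      · exfalso
        rw [hvi, hvj0, w_inj] at h
        have hd : ((i : ℕ) : ℤ) - ((j0 : ℕ) : ℤ) = (e : ℤ) * (ki - k0) := by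
          have he : (e : ℤ) * (ki - k0) = e * ki - e * k0 := by ring
          omega
        have hilt : ((i : ℕ) : ℤ) < e := by exact_mod_cast i.isLt
        have hjlt : ((j0 : ℕ) : ℤ) < e := by exact_mod_cast j0.isLt
        have h0 : ((i : ℕ) : ℤ) - ((j0 : ℕ) : ℤ) = 0 :=
          dvd_small ⟨ki - k0, hd⟩ (by omega) (by omega)
        exact hine (Fin.ext (by omega))
    · have h1 : v (algebraMap F L (a i)) ≤ 1 := by
        by_contra h1
        exact hiS (by simp [hS, not_le.mp h1])
      calc v (f i) = v (algebraMap F L (a i)) * w (t - i) := by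
            rw [hf]; simp only; rw [map_mul, hvz_of v hϖ]; congr 1; exact w_inj.mpr (by omega)
        _ ≤ 1 * w (t - i) := mul_le_mul_left h1 _
        _ = w (t - i) := one_mul _
        _ ≤ w t := w_le_w.mpr (by omega)
        _ < v (f j0) := hgt
  rw [key] at hle
  exact absurd hle (not_le.mpr hgt)

lemma linindep (hϖ : v ϖ = w (-1))
    (hF : ∀ c : F, c ≠ 0 → ∃ k : ℤ, v (algebraMap F L c) = w (e * k))
    (t : ℤ) (a : Fin e → F)
    (hsum : ∑ j : Fin e, algebraMap F L (a j) * ϖ ^ (((j : ℕ) : ℤ) - t) = 0) :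
    ∀ j, a j = 0 := by
  classical
  by_contra hcon
  push_neg at hcon
  obtain ⟨j1, hj1⟩ := hcon
  set f : Fin e → L := fun j => algebraMap F L (a j) * ϖ ^ (((j : ℕ) : ℤ) - t) with hf
  set S : Finset (Fin e) := Finset.univ.filter (fun j => a j ≠ 0) with hS
  have hj1S : j1 ∈ S := by simp [hS, hj1]
  have hSfacts : ∀ j ∈ S, ∃ k : ℤ, v (f j) = w (e * k + t - j) := by
    intro j hj
    have ha0 : a j ≠ 0 := by simpa [hS] using hj
    obtain ⟨k, hk⟩ := hF (a j) ha0
    refine ⟨k, ?_⟩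
    rw [hf]
    simp only
    rw [map_mul, hvz_of v hϖ, hk, w_mul]
    congr 1
    omega
  obtain ⟨j0, hj0S, hj0max⟩ := S.exists_max_image (fun j => v (f j)) ⟨j1, hj1S⟩
  obtain ⟨k0, hvj0⟩ := hSfacts j0 hj0S
  have key : v (∑ j : Fin e, f j) = v (f j0) := by
    refine v.map_sum_eq_of_lt (Finset.mem_univ j0) ?_
    intro i hi
    have hine : i ≠ j0 := by simpa using hi
    by_cases hiS : i ∈ S
    · obtain ⟨ki, hvki⟩ := hSfacts i hiS
      have hle' : v (f i) ≤ v (f j0) := hj0max i hiS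
      rcases lt_or_eq_of_le hle' with h | h
      · exact h
      · exfalso
        rw [hvki, hvj0, w_inj] at h
        have hd : ((i : ℕ) : ℤ) - ((j0 : ℕ) : ℤ) = (e : ℤ) * (ki - k0) := by
          have he : (e : ℤ) * (ki - k0) = e * ki - e * k0 := by ring
          omega
        have hilt : ((i : ℕ) : ℤ) < e := by exact_mod_cast i.isLt
        have hjlt : ((j0 : ℕ) : ℤ) < e := by exact_mod_cast j0.isLt
        have h0 : ((i : ℕ) : ℤ) - ((j0 : ℕ) : ℤ) = 0 :=
          dvd_small ⟨ki - k0, hd⟩ (by omega) (by omega)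
        exact hine (Fin.ext (by omega))
    · have ha0 : a i = 0 := by
        by_contra h1
        exact hiS (by simp [hS, h1])
      have : v (f i) = 0 := by
        rw [hf]; simp only [ha0, map_zero, zero_mul, map_zero]
      rw [this, hvj0]
      exact lt_of_le_of_ne (zero_le') (Ne.symm (w_ne_zero _))
  rw [hsum, map_zero] at key
  exact (w_ne_zero _) (by rw [← hvj0, ← key])

end

end Stmt14Aux

open Stmt14Aux

/-- Let `F` be a `p`-adic field with odd residue characteristic containing
the `(q_F - 1)`-st roots of unity, `e` an odd divisor of `q_F - 1` prime to `p` (so `e` is a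
unit of `O_F`), `π` a uniformizer of `F` and `L = F(ϖ)` with `ϖ^e = π` the corresponding
cyclic totally ramified Kummer extension of degree `e`, with `Gal(L/F)` generated by
`σ₀ : ϖ ↦ ζ_e ϖ`.  With `v` the normalized valuation of `L` (so `v ϖ = -1` additively, and
`v(Fˣ) = eℤ`), the square root of the inverse different is `A_{L/F} = ϖ^{(1-e)/2} O_L`, and
the element `α = e⁻¹ Σ_{k=0}^{e-1} ϖ^{k+(1-e)/2}` is a free generator:
`O_F[Gal(L/F)] · α = A_{L/F}`. -/
theorem stmt14 (F L : Type*) [Field F] [Field L] [Algebra F L]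
    [FiniteDimensional F L] [IsGalois F L]
    (v : Valuation L (WithZero (Multiplicative ℤ)))
    (e : ℕ) (he : Odd e) (hpos : 0 < e)
    (hfinrank : Module.finrank F L = e)
    (ϖ : L) (hϖ : v ϖ = (ofAdd (-1 : ℤ) : Multiplicative ℤ))
    (π : F) (hπ : algebraMap F L π = ϖ ^ e)
    (hadj : IntermediateField.adjoin F {ϖ} = ⊤)
    (htotram : ∀ c : F, c ≠ 0 → ∃ k : ℤ,
      v (algebraMap F L c) = ((ofAdd (-(e : ℤ)) : Multiplicative ℤ) : WithZero (Multiplicative ℤ)) ^ k)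
    (hetame : v ((e : L)) = 1)
    (ζ : F) (hζ : IsPrimitiveRoot ζ e)
    (σ₀ : L ≃ₐ[F] L) (hσ₀ : σ₀ ϖ = algebraMap F L ζ * ϖ)
    (hgen : ∀ ρ : L ≃ₐ[F] L, ∃ i : ℕ, ρ = σ₀ ^ i)
    (α : L)
    (hα : α = (e : L)⁻¹ * ∑ k ∈ Finset.range e, ϖ ^ ((k : ℤ) + (1 - (e : ℤ)) / 2)) :
    {x : L | ∃ c : (L ≃ₐ[F] L) → F,
        (∀ ρ : L ≃ₐ[F] L, v (algebraMap F L (c ρ)) ≤ 1) ∧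
        x = ∑ ρ : L ≃ₐ[F] L, algebraMap F L (c ρ) * ρ α} =
      {x : L | v (ϖ ^ (((e : ℤ) - 1) / 2) * x) ≤ 1} := by
  classical
  obtain ⟨t, ht⟩ := he
  set T : ℤ := (t : ℤ) with hTdef
  have he' : (e : ℤ) = 2 * T + 1 := by omega
  have hT0 : 0 ≤ T := by omega
  have hTexp : ((e : ℤ) - 1) / 2 = T := by omega
  have hϖw : v ϖ = w (-1) := hϖ
  have hvz : ∀ z : ℤ, v (ϖ ^ z) = w (-z) := hvz_of v hϖw
  have hϖ0 : ϖ ≠ 0 := by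
    intro h
    rw [h, map_zero] at hϖw
    exact (w_ne_zero (-1)) hϖw.symm
  have hF : ∀ c : F, c ≠ 0 → ∃ k : ℤ, v (algebraMap F L c) = w (e * k) := by
    intro c hc
    obtain ⟨k, hk⟩ := htotram c hc
    refine ⟨-k, ?_⟩
    rw [hk, show (((ofAdd (-(e : ℤ)) : Multiplicative ℤ) : WithZero (Multiplicative ℤ)))
        = w (-(e : ℤ)) from rfl, w_zpow]
    congr 1
    ring
  have hζ0 : ζ ≠ 0 := hζ.ne_zero (by omega)
  set β : L := algebraMap F L ζ with hβdef
  have hβ0 : β ≠ 0 := by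
    rw [hβdef]
    exact (map_ne_zero (algebraMap F L)).mpr hζ0
  have hβprim : IsPrimitiveRoot β e := by
    rw [hβdef]
    exact hζ.map_of_injective (algebraMap F L).injective
  have hβe : β ^ e = 1 := hβprim.pow_eq_one
  have hβv : v β = 1 := by
    have h0 : v β ≠ 0 := v.ne_zero_iff.mpr hβ0
    have h1 : (v β) ^ e = 1 := by rw [← map_pow, hβe, map_one]
    have hgc : ((WithZero.unzero h0 : Multiplicative ℤ) : WithZero (Multiplicative ℤ)) = v β :=
      WithZero.coe_unzero h0
    rw [← hgc] at h1 ⊢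
    rw [← WithZero.coe_pow, show (1 : WithZero (Multiplicative ℤ))
        = ((1 : Multiplicative ℤ) : WithZero (Multiplicative ℤ)) from rfl, WithZero.coe_inj] at h1
    have h2 : (e : ℤ) * (WithZero.unzero h0).toAdd = 0 := by
      have h2' := congrArg Multiplicative.toAdd h1
      rw [toAdd_pow, toAdd_one, nsmul_eq_mul] at h2'
      exact_mod_cast h2'
    have h3 : (WithZero.unzero h0).toAdd = 0 := by
      have he0 : (e : ℤ) ≠ 0 := by omega
      exact (mul_eq_zero.mp h2).resolve_left he0
    have h4 : WithZero.unzero h0 = 1 := by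
      have h4' := congrArg Multiplicative.ofAdd h3
      simpa using h4'
    rw [h4, WithZero.coe_one]
  have hβz : ∀ z : ℤ, v (β ^ z) = 1 := by
    intro z
    rw [map_zpow₀, hβv, one_zpow]
  have heL0 : (e : L) ≠ 0 := by
    intro h
    rw [h, map_zero] at hetame
    exact zero_ne_one hetame
  have hpow : ∀ i : ℕ, (σ₀ ^ i) ϖ = β ^ i * ϖ := by
    intro i
    induction i with
    | zero => simp
    | succ n ih =>
      rw [pow_succ', AlgEquiv.mul_apply, ih, map_mul, map_pow, hβdef, AlgEquiv.commutes, hσ₀]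
      ring
  have hzpow : ∀ (i : ℕ) (z : ℤ), (σ₀ ^ i) (ϖ ^ z) = β ^ ((i : ℤ) * z) * ϖ ^ z := by
    intro i z
    rw [map_zpow₀, hpow i, mul_zpow, ← zpow_natCast β i, ← zpow_mul]
  have hαdef : α = (e : L)⁻¹ * ∑ k ∈ Finset.range e, ϖ ^ ((k : ℤ) - T) := by
    rw [hα]
    congr 1
    refine Finset.sum_congr rfl fun k _ => ?_
    rw [show (k : ℤ) + (1 - (e : ℤ)) / 2 = (k : ℤ) - T from by omega]
  have hρα : ∀ i : ℕ, (σ₀ ^ i) α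
      = (e : L)⁻¹ * ∑ k ∈ Finset.range e, β ^ ((i : ℤ) * ((k : ℤ) - T)) * ϖ ^ ((k : ℤ) - T) := by
    intro i
    rw [hαdef, map_mul, map_inv₀, map_natCast, map_sum]
    congr 1
    exact Finset.sum_congr rfl fun k _ => hzpow i _
  have hvρα : ∀ ρ : L ≃ₐ[F] L, v (ρ α) ≤ w T := by
    intro ρ
    obtain ⟨i, rfl⟩ := hgen ρ
    rw [hρα i, map_mul, map_inv₀, hetame, inv_one, one_mul]
    refine v.map_sum_le fun k _ => ?_
    rw [map_mul, hβz, one_mul, hvz]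
    exact w_le_w.mpr (by omega)
  have horth : ∀ d : ℤ, ∑ i : Fin e, β ^ (((i : ℕ) : ℤ) * d)
      = (if (e : ℤ) ∣ d then (e : L) else 0) := by
    intro d
    have hrw : ∀ i : Fin e, β ^ (((i : ℕ) : ℤ) * d) = (β ^ d) ^ ((i : ℕ)) := by
      intro i
      rw [mul_comm, zpow_mul, zpow_natCast]
    have h1 : ∑ i : Fin e, β ^ (((i : ℕ) : ℤ) * d) = ∑ i ∈ Finset.range e, (β ^ d) ^ i := by
      rw [← Fin.sum_univ_eq_sum_range (fun i => (β ^ d) ^ i) e]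
      exact Finset.sum_congr rfl fun i _ => hrw i
    rw [h1]
    by_cases hd : (e : ℤ) ∣ d
    · rw [if_pos hd, (hβprim.zpow_eq_one_iff_dvd d).mpr hd]
      simp
    · rw [if_neg hd]
      have hne : β ^ d - 1 ≠ 0 :=
        sub_ne_zero.mpr (fun h => hd ((hβprim.zpow_eq_one_iff_dvd d).mp h))
      have hpe : (β ^ d) ^ e = 1 := by
        rw [← zpow_natCast (β ^ d) e, ← zpow_mul, mul_comm, zpow_mul, zpow_natCast, hβe, one_zpow]
      have hg := geom_sum_mul (β ^ d) e
      rw [hpe, sub_self] at hg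
      exact (mul_eq_zero.mp hg).resolve_right hne
  have hcard : Fintype.card (L ≃ₐ[F] L) = e := by
    rw [← Nat.card_eq_fintype_card, IsGalois.card_aut_eq_finrank, hfinrank]
  have hinj : Function.Injective (fun i : Fin e => σ₀ ^ (i : ℕ)) := by
    intro i j hij
    have h1 : β ^ (i : ℕ) * ϖ = β ^ (j : ℕ) * ϖ := by
      rw [← hpow, ← hpow]
      exact congrArg (fun ρ : L ≃ₐ[F] L => ρ ϖ) hij
    have h2 : β ^ (i : ℕ) = β ^ (j : ℕ) := mul_right_cancel₀ hϖ0 h1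
    have h3 : ζ ^ (i : ℕ) = ζ ^ (j : ℕ) := by
      apply (algebraMap F L).injective
      rw [map_pow, map_pow, ← hβdef]
      exact h2
    exact Fin.ext (hζ.pow_inj i.isLt j.isLt h3)
  have hbij : Function.Bijective (fun i : Fin e => σ₀ ^ (i : ℕ)) :=
    (Fintype.bijective_iff_injective_and_card _).mpr ⟨hinj, by simp [hcard]⟩
  set E : Fin e ≃ (L ≃ₐ[F] L) := Equiv.ofBijective _ hbij with hE
  have hEapp : ∀ i : Fin e, E i = σ₀ ^ (i : ℕ) := fun i => rfl
  ext x
  simp only [Set.mem_setOf_eq]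
  rw [hTexp]
  constructor
  · rintro ⟨c, hc1, rfl⟩
    have hsum : v (∑ ρ : L ≃ₐ[F] L, algebraMap F L (c ρ) * ρ α) ≤ w T := by
      refine v.map_sum_le fun ρ _ => ?_
      rw [map_mul]
      calc v (algebraMap F L (c ρ)) * v (ρ α) ≤ 1 * w T := mul_le_mul' (hc1 ρ) (hvρα ρ)
        _ = w T := one_mul _
    rw [map_mul, hvz]
    calc w (-T) * v (∑ ρ : L ≃ₐ[F] L, algebraMap F L (c ρ) * ρ α)
        ≤ w (-T) * w T := mul_le_mul_right hsum _
      _ = 1 := by rw [w_mul, show -T + T = 0 from by ring, w_zero]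
  · intro hx
    have hvx : v x ≤ w T := by
      rw [map_mul, hvz] at hx
      calc v x = w T * (w (-T) * v x) := by
            rw [← mul_assoc, w_mul, show T + -T = 0 from by ring, w_zero, one_mul]
        _ ≤ w T * 1 := mul_le_mul_right hx _
        _ = w T := mul_one _
    haveI : Nonempty (Fin e) := ⟨⟨0, hpos⟩⟩
    have hli : LinearIndependent F (fun j : Fin e => ϖ ^ (((j : ℕ) : ℤ) - T)) := by
      rw [Fintype.linearIndependent_iff]
      intro g hg
      refine linindep v hϖw hF T g ?_
      rw [← hg]
      exact Finset.sum_congr rfl fun j _ => (Algebra.smul_def _ _).symm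
    have hcard' : Fintype.card (Fin e) = Module.finrank F L := by simp [hfinrank]
    set b := basisOfLinearIndependentOfCardEqFinrank hli hcard' with hbdef
    have hb : ∀ j : Fin e, b j = ϖ ^ (((j : ℕ) : ℤ) - T) := fun j =>
      congrFun (coe_basisOfLinearIndependentOfCardEqFinrank hli hcard') j
    set a : Fin e → F := fun j => b.repr x j with hadef
    have hxsum : x = ∑ j : Fin e, algebraMap F L (a j) * ϖ ^ (((j : ℕ) : ℤ) - T) := by
      conv_lhs => rw [← b.sum_repr x]
      refine Finset.sum_congr rfl fun j _ => ?_
      rw [Algebra.smul_def, hb j]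
    have hbound : ∀ j, v (algebraMap F L (a j)) ≤ 1 :=
      coeff_bound v hpos hϖw hF T a (by rw [← hxsum]; exact hvx)
    set c : (L ≃ₐ[F] L) → F :=
      fun ρ => ∑ j : Fin e, a j * ζ ^ (-(((E.symm ρ : Fin e) : ℕ) : ℤ) * (((j : ℕ) : ℤ) - T))
      with hcdef
    refine ⟨c, ?_, ?_⟩
    · intro ρ
      simp only [hcdef]
      rw [map_sum]
      refine v.map_sum_le fun j _ => ?_
      rw [map_mul, map_zpow₀, ← hβdef, map_mul, hβz, mul_one]
      exact hbound j
    · have hcE : ∀ i : Fin e, algebraMap F L (c (E i))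
          = ∑ j : Fin e, algebraMap F L (a j)
              * β ^ (-(((i : ℕ)) : ℤ) * (((j : ℕ) : ℤ) - T)) := by
        intro i
        simp only [hcdef, Equiv.symm_apply_apply]
        rw [map_sum]
        exact Finset.sum_congr rfl fun j _ => by rw [map_mul, map_zpow₀, ← hβdef]
      have hEα : ∀ i : Fin e, (E i) α
          = (e : L)⁻¹ * ∑ k : Fin e, β ^ ((((i : ℕ)) : ℤ) * (((k : ℕ) : ℤ) - T))
              * ϖ ^ (((k : ℕ) : ℤ) - T) := by
        intro i
        rw [hEapp i, hρα (i : ℕ)]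
        congr 1
        rw [← Fin.sum_univ_eq_sum_range
          (fun k => β ^ ((((i : ℕ)) : ℤ) * ((k : ℤ) - T)) * ϖ ^ ((k : ℤ) - T)) e]
      set g : Fin e → Fin e → Fin e → L := fun k j i =>
        (e : L)⁻¹ * (algebraMap F L (a j)
          * β ^ ((((i : ℕ)) : ℤ) * (((k : ℕ) : ℤ) - ((j : ℕ) : ℤ)))
          * ϖ ^ (((k : ℕ) : ℤ) - T)) with hgdef
      have hstep : ∀ i : Fin e,
          algebraMap F L (c (E i)) * (E i) α = ∑ k : Fin e, ∑ j : Fin e, g k j i := by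
        intro i
        rw [hcE i, hEα i, Finset.sum_mul]
        simp_rw [Finset.mul_sum]
        rw [Finset.sum_comm]
        refine Finset.sum_congr rfl fun k _ => Finset.sum_congr rfl fun j _ => ?_
        simp only [hgdef]
        have hββ : β ^ (-(((i : ℕ)) : ℤ) * (((j : ℕ) : ℤ) - T))
              * β ^ ((((i : ℕ)) : ℤ) * (((k : ℕ) : ℤ) - T))
            = β ^ ((((i : ℕ)) : ℤ) * (((k : ℕ) : ℤ) - ((j : ℕ) : ℤ))) := by
          rw [← zpow_add₀ hβ0]
          congr 1
          ring
        calc algebraMap F L (a j) * β ^ (-(((i : ℕ)) : ℤ) * (((j : ℕ) : ℤ) - T))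
              * ((e : L)⁻¹ * (β ^ ((((i : ℕ)) : ℤ) * (((k : ℕ) : ℤ) - T))
                * ϖ ^ (((k : ℕ) : ℤ) - T)))
            = (e : L)⁻¹ * (algebraMap F L (a j)
                * (β ^ (-(((i : ℕ)) : ℤ) * (((j : ℕ) : ℤ) - T))
                  * β ^ ((((i : ℕ)) : ℤ) * (((k : ℕ) : ℤ) - T)))
                * ϖ ^ (((k : ℕ) : ℤ) - T)) := by ring
          _ = _ := by rw [hββ]
      have hk : ∀ k : Fin e, ∑ i : Fin e, ∑ j : Fin e, g k j i
          = algebraMap F L (a k) * ϖ ^ (((k : ℕ) : ℤ) - T) := by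
        intro k
        have hinner : ∀ j : Fin e, ∑ i : Fin e, g k j i
            = ((e : L)⁻¹ * algebraMap F L (a j) * ϖ ^ (((k : ℕ) : ℤ) - T))
              * (if (e : ℤ) ∣ (((k : ℕ) : ℤ) - ((j : ℕ) : ℤ)) then (e : L) else 0) := by
          intro j
          rw [← horth (((k : ℕ) : ℤ) - ((j : ℕ) : ℤ)), Finset.mul_sum]
          refine Finset.sum_congr rfl fun i _ => ?_
          simp only [hgdef]
          ring
        calc ∑ i : Fin e, ∑ j : Fin e, g k j i
            = ∑ j : Fin e, ∑ i : Fin e, g k j i := Finset.sum_comm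
          _ = ∑ j : Fin e, ((e : L)⁻¹ * algebraMap F L (a j) * ϖ ^ (((k : ℕ) : ℤ) - T))
              * (if (e : ℤ) ∣ (((k : ℕ) : ℤ) - ((j : ℕ) : ℤ)) then (e : L) else 0) :=
            Finset.sum_congr rfl fun j _ => hinner j
          _ = ∑ j : Fin e, (if j = k
              then algebraMap F L (a j) * ϖ ^ (((k : ℕ) : ℤ) - T) else 0) := by
            refine Finset.sum_congr rfl fun j _ => ?_
            by_cases hjk : j = k
            · subst hjk
              rw [if_pos (by simp), if_pos rfl]
              field_simp
            · have hk' : ((k : ℕ) : ℤ) < e := by exact_mod_cast k.isLt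
              have hj' : ((j : ℕ) : ℤ) < e := by exact_mod_cast j.isLt
              rw [if_neg ?_, if_neg hjk, mul_zero]
              intro hdvd
              have h0 := dvd_small hdvd (by omega) (by omega)
              exact hjk (Fin.ext (by omega))
          _ = algebraMap F L (a k) * ϖ ^ (((k : ℕ) : ℤ) - T) := by
            rw [Finset.sum_ite_eq' Finset.univ k
              (fun j => algebraMap F L (a j) * ϖ ^ (((k : ℕ) : ℤ) - T))]
            simp
      calc x = ∑ j : Fin e, algebraMap F L (a j) * ϖ ^ (((j : ℕ) : ℤ) - T) := hxsum
        _ = ∑ k : Fin e, ∑ i : Fin e, ∑ j : Fin e, g k j i :=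
          Finset.sum_congr rfl fun k _ => (hk k).symm
        _ = ∑ i : Fin e, ∑ k : Fin e, ∑ j : Fin e, g k j i := Finset.sum_comm
        _ = ∑ i : Fin e, algebraMap F L (c (E i)) * (E i) α :=
          Finset.sum_congr rfl fun i _ => (hstep i).symm
        _ = ∑ ρ : L ≃ₐ[F] L, algebraMap F L (c ρ) * ρ α :=
          Equiv.sum_comp E (fun ρ : L ≃ₐ[F] L => algebraMap F L (c ρ) * ρ α)
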